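/- Let n ≥ 1, let (p, q) be a Farey chain of length n equipped with a parent assignment (j₁, j₂), and let (s_j)_{0 ≤ j ≤ n+1} be the associated Σ-vectors in ℤⁿ. Then: (1) ⟨s_j, s_j⟩ = p (j+1) * q (j−1) − p (j−1) * q (j+1) for every 1 ≤ j ≤ n; (2) ⟨s_0, s_0⟩ = q 1 and ⟨s_{n+1}, s_{n+1}⟩ = p n; (3) ⟨s_j, s_{j+1}⟩ = −1 for every 0 ≤ j ≤ n; (4) ⟨s_0, s_{n+1}⟩ = 1; (5) ⟨s_j, s_l⟩ = 0 whenever 0 ≤ j < l ≤ n+1, l − j ≥ 2, and (j, l) ≠ (0, n+1). -/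

import Mathlib

structure FC where
  n : ℕ
  hn : 1 ≤ n
  p : ℕ → ℕ
  q : ℕ → ℕ
  j₁ : ℕ → ℕ
  j₂ : ℕ → ℕ
  hp0 : p 0 = 0
  hq0 : q 0 = 1
  hpn : p (n + 1) = 1
  hqn : q (n + 1) = 0
  hfarey : ∀ i ≤ n, p (i + 1) * q i = p i * q (i + 1) + 1
  hj₁ : ∀ i, 1 ≤ i → i ≤ n → j₁ i ≤ n + 1
  hj₂ : ∀ i, 1 ≤ i → i ≤ n → j₂ i ≤ n + 1
  hparent : ∀ i, 1 ≤ i → i ≤ n →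
      p (j₁ i) + p (j₂ i) = p i ∧ q (j₁ i) + q (j₂ i) = q i ∧
        p i * q (j₁ i) = p (j₁ i) * q i + 1

namespace FC
variable (F : FC)

/-- determinant -/
def D (a b : ℕ) : ℤ := (F.p a : ℤ) * F.q b - (F.p b : ℤ) * F.q a

lemma Dskew (a b : ℕ) : F.D a b = - F.D b a := by unfold D; ring

lemma Ddiag (a : ℕ) : F.D a a = 0 := by unfold D; ring

lemma qpos : ∀ i ≤ F.n, 1 ≤ F.q i := by
  intro i hi
  have h := F.hfarey i hi
  rcases Nat.eq_zero_or_pos (F.q i) with h0 | h0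
  · rw [h0, Nat.mul_zero] at h; omega
  · exact h0

lemma ppos : ∀ i, 1 ≤ i → i ≤ F.n + 1 → 1 ≤ F.p i := by
  intro i h1 h2
  obtain ⟨k, rfl⟩ : ∃ k, i = k + 1 := ⟨i - 1, by omega⟩
  have h := F.hfarey k (by omega)
  rcases Nat.eq_zero_or_pos (F.p (k+1)) with h0 | h0
  · rw [h0, Nat.zero_mul] at h; omega
  · exact h0

lemma p1 : F.p 1 = 1 := by
  have h := F.hfarey 0 (by omega)
  rw [F.hp0, F.hq0] at h; simp at h; omega

lemma qn : F.q F.n = 1 := by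
  have h := F.hfarey F.n (by omega)
  rw [F.hpn, F.hqn] at h; simp at h; omega

lemma Dsucc : ∀ i ≤ F.n, F.D (i+1) i = 1 := by
  intro i hi
  have h := F.hfarey i hi
  have : (F.p (i+1) : ℤ) * F.q i = (F.p i : ℤ) * F.q (i+1) + 1 := by exact_mod_cast h
  unfold D; linarith

lemma Dpos : ∀ a b, b < a → a ≤ F.n + 1 → 1 ≤ F.D a b := by
  intro a
  induction a with
  | zero => omega
  | succ l ih =>
    intro b hb ha
    rcases Nat.lt_or_ge b l with hbl | hbl
    · -- b < l, use identity q_l * D (l+1) b = q_b * D (l+1) l + q_{l+1} * D l b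
      have hid : (F.q l : ℤ) * F.D (l+1) b = (F.q b : ℤ) * F.D (l+1) l + (F.q (l+1) : ℤ) * F.D l b := by
        unfold D; ring
      have h1 : F.D (l+1) l = 1 := F.Dsucc l (by omega)
      have h2 : 1 ≤ F.D l b := ih b hbl (by omega)
      have hqb : 1 ≤ F.q b := F.qpos b (by omega)
      have hql : 1 ≤ F.q l := F.qpos l (by omega)
      have hql1 : 0 ≤ (F.q (l+1) : ℤ) := by positivity
      rw [h1] at hid
      have hqbz : (1:ℤ) ≤ F.q b := by exact_mod_cast hqb
      have hqlz : (1:ℤ) ≤ F.q l := by exact_mod_cast hql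
      nlinarith [hid]
    · have : b = l := by omega
      subst this
      exact le_of_eq (F.Dsucc b (by omega)).symm

lemma lt_of_Dpos : ∀ a b, a ≤ F.n + 1 → b ≤ F.n + 1 → 1 ≤ F.D a b → b < a := by
  intro a b ha hb h
  rcases Nat.lt_trichotomy b a with h1 | h1 | h1
  · exact h1
  · subst h1; rw [Ddiag] at h; omega
  · have := F.Dpos b a h1 hb
    rw [Dskew] at h; omega

lemma inj : ∀ a b, a ≤ F.n + 1 → b ≤ F.n + 1 →
    (F.p a : ℤ) = F.p b → (F.q a : ℤ) = F.q b → a = b := by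
  intro a b ha hb hp hq
  by_contra hne
  have hD : F.D a b = 0 := by unfold D; rw [hp, hq]; ring
  rcases Nat.lt_trichotomy a b with h1 | h1 | h1
  · have := F.Dpos b a h1 hb; rw [Dskew] at hD; omega
  · exact hne h1
  · have := F.Dpos a b h1 ha; omega

section Parents
variable {F}

lemma Dj1 {i : ℕ} (h1 : 1 ≤ i) (h2 : i ≤ F.n) : F.D i (F.j₁ i) = 1 := by
  have h := (F.hparent i h1 h2).2.2
  have : (F.p i : ℤ) * F.q (F.j₁ i) = (F.p (F.j₁ i) : ℤ) * F.q i + 1 := by exact_mod_cast h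
  unfold D; linarith

lemma Dj2 {i : ℕ} (h1 : 1 ≤ i) (h2 : i ≤ F.n) : F.D i (F.j₂ i) = -1 := by
  obtain ⟨hp, hq, hd⟩ := F.hparent i h1 h2
  have hpz : (F.p (F.j₁ i) : ℤ) + F.p (F.j₂ i) = F.p i := by exact_mod_cast hp
  have hqz : (F.q (F.j₁ i) : ℤ) + F.q (F.j₂ i) = F.q i := by exact_mod_cast hq
  have hdz : (F.p i : ℤ) * F.q (F.j₁ i) = (F.p (F.j₁ i) : ℤ) * F.q i + 1 := by exact_mod_cast hd
  unfold D; nlinarith [hpz, hqz, hdz]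

lemma j1_lt {i : ℕ} (h1 : 1 ≤ i) (h2 : i ≤ F.n) : F.j₁ i < i :=
  F.lt_of_Dpos i (F.j₁ i) (by omega) (F.hj₁ i h1 h2) (le_of_eq (Dj1 h1 h2).symm)

lemma j2_gt {i : ℕ} (h1 : 1 ≤ i) (h2 : i ≤ F.n) : i < F.j₂ i := by
  have h := Dj2 (F := F) h1 h2
  have := F.Dskew i (F.j₂ i)
  exact F.lt_of_Dpos (F.j₂ i) i (F.hj₂ i h1 h2) (by omega) (by omega)

lemma box1p {i : ℕ} (h1 : 1 ≤ i) (h2 : i ≤ F.n) : F.p (F.j₁ i) ≤ F.p i := by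
  have := (F.hparent i h1 h2).1; omega
lemma box1q {i : ℕ} (h1 : 1 ≤ i) (h2 : i ≤ F.n) : F.q (F.j₁ i) ≤ F.q i := by
  have := (F.hparent i h1 h2).2.1; omega
lemma box2p {i : ℕ} (h1 : 1 ≤ i) (h2 : i ≤ F.n) : F.p (F.j₂ i) ≤ F.p i := by
  have := (F.hparent i h1 h2).1; omega
lemma box2q {i : ℕ} (h1 : 1 ≤ i) (h2 : i ≤ F.n) : F.q (F.j₂ i) ≤ F.q i := by
  have := (F.hparent i h1 h2).2.1; omega

end Parents

/-- Bezout witnesses for (p j, q j). -/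
lemma copr : ∀ j ≤ F.n + 1, ∃ a b : ℤ, a * F.p j + b * F.q j = 1 := by
  intro j hj
  rcases Nat.eq_zero_or_pos j with rfl | hj0
  · exact ⟨0, 1, by rw [F.hq0]; simp⟩
  · obtain ⟨k, rfl⟩ : ∃ k, j = k + 1 := ⟨j - 1, by omega⟩
    have h := F.Dsucc k (by omega)
    exact ⟨F.q k, -(F.p k : ℤ), by unfold D at h; linarith⟩

/-- uniqueness of the left parent among box solutions (value level) -/
lemma uniq : ∀ t, 1 ≤ t → t ≤ F.n → ∀ x y : ℕ,
    (F.p t : ℤ) * y - (x : ℤ) * F.q t = 1 → x ≤ F.p t → y ≤ F.q t →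
    ((x : ℤ) = F.p (F.j₁ t) ∧ (y : ℤ) = F.q (F.j₁ t)) := by
  intro t h1 h2 x y hxy hx hy
  have hd := Dj1 (F := F) h1 h2
  unfold D at hd
  -- p t * (y - b) = (x - a) * q t where a = p (j₁ t), b = q (j₁ t)
  set a := (F.p (F.j₁ t) : ℤ) with ha
  set b := (F.q (F.j₁ t) : ℤ) with hb
  have key : (F.p t : ℤ) * ((y : ℤ) - b) = ((x : ℤ) - a) * F.q t := by linarith
  obtain ⟨u, v, huv⟩ := F.copr t (by omega)
  have hdvd : (F.q t : ℤ) ∣ ((y : ℤ) - b) := by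
    have h1' : (F.q t : ℤ) ∣ (F.p t : ℤ) * ((y : ℤ) - b) := ⟨(x : ℤ) - a, by linarith⟩
    have hid : ((y : ℤ) - b) = u * ((F.p t : ℤ) * ((y:ℤ) - b)) + v * F.q t * ((y:ℤ)-b) := by
      linear_combination ((y:ℤ) - b) * huv.symm
    rw [hid]
    exact dvd_add (Dvd.dvd.mul_left h1' u) (Dvd.dvd.mul_right (Dvd.dvd.mul_left dvd_rfl v) _)
  obtain ⟨k, hk⟩ := hdvd
  have hqt : (1:ℤ) ≤ F.q t := by exact_mod_cast F.qpos t h2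
  have hbq : b ≤ (F.q t : ℤ) := by
    rw [hb]
    exact_mod_cast box1q (F := F) h1 h2
  have hb0 : 0 ≤ b := by positivity
  have hy0 : (0:ℤ) ≤ y := by positivity
  have hyq : (y:ℤ) ≤ F.q t := by exact_mod_cast hy
  -- k ∈ {-1, 0, 1}
  have hk1 : k ≤ 1 := by nlinarith [hk, hqt]
  have hk2 : -1 ≤ k := by nlinarith [hk, hqt]
  have hkrange : k = -1 ∨ k = 0 ∨ k = 1 := by omega
  have hpt : (1:ℤ) ≤ F.p t := by exact_mod_cast F.ppos t h1 (by omega)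
  rcases hkrange with rfl | rfl | rfl
  · -- y - b = -q t: y = 0, b = q t, then 1 = p t * 0 - x q t ≤ 0, contra
    have hy' : (y : ℤ) = 0 ∧ b = F.q t := by omega
    have hx0 : (0:ℤ) ≤ x := by positivity
    rw [hy'.1] at hxy
    nlinarith [hxy]
  · have hyb : (y : ℤ) = b := by omega
    constructor
    · have : ((x:ℤ) - a) * F.q t = 0 := by rw [← key, hyb]; ring
      have := mul_eq_zero.mp this
      omega
    · exact hyb
  · have hy' : (y : ℤ) = F.q t ∧ b = 0 := by omega
    have ha0 : 0 ≤ a := by positivity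
    rw [hy'.2] at hd
    nlinarith [hd]

lemma char1 {t x : ℕ} (h1 : 1 ≤ t) (h2 : t ≤ F.n) (hx : x ≤ F.n + 1)
    (hD : F.D t x = 1) (hbp : F.p x ≤ F.p t) (hbq : F.q x ≤ F.q t) : x = F.j₁ t := by
  unfold D at hD
  have := F.uniq t h1 h2 (F.p x) (F.q x) (by push_cast; linarith) hbp hbq
  exact F.inj x (F.j₁ t) hx (F.hj₁ t h1 h2) this.1 this.2

lemma char2 {t x : ℕ} (h1 : 1 ≤ t) (h2 : t ≤ F.n) (hx : x ≤ F.n + 1)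
    (hD : F.D t x = -1) (hbp : F.p x ≤ F.p t) (hbq : F.q x ≤ F.q t) : x = F.j₂ t := by
  unfold D at hD
  have hcast : ((F.p t - F.p x : ℕ) : ℤ) = (F.p t : ℤ) - F.p x := by
    push_cast [Nat.cast_sub hbp]; ring
  have hcast2 : ((F.q t - F.q x : ℕ) : ℤ) = (F.q t : ℤ) - F.q x := by
    push_cast [Nat.cast_sub hbq]; ring
  have := F.uniq t h1 h2 (F.p t - F.p x) (F.q t - F.q x)
    (by rw [hcast, hcast2]; ring_nf; linarith) (by omega) (by omega)
  obtain ⟨hp', hq'⟩ := this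
  rw [hcast] at hp'; rw [hcast2] at hq'
  obtain ⟨hps, hqs, -⟩ := F.hparent t h1 h2
  have hpz : (F.p (F.j₁ t) : ℤ) + F.p (F.j₂ t) = F.p t := by exact_mod_cast hps
  have hqz : (F.q (F.j₁ t) : ℤ) + F.q (F.j₂ t) = F.q t := by exact_mod_cast hqs
  exact F.inj x (F.j₂ t) hx (F.hj₂ t h1 h2) (by linarith) (by linarith)

/-- comparability from det = 1 (pure arithmetic) -/
lemma comparZ (pa qa pb qb : ℕ) (h : (pa:ℤ) * qb - (pb:ℤ) * qa = 1) :
    (pb ≤ pa ∧ qb ≤ qa) ∨ (pa ≤ pb ∧ qa ≤ qb) ∨ (pb = 0 ∧ qa = 0) := by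
  rcases le_or_gt pb pa with h1 | h1 <;> rcases le_or_gt qb qa with h2 | h2
  · exact Or.inl ⟨h1, h2⟩
  · -- pb ≤ pa, qa < qb
    rcases le_or_gt pa pb with h3 | h3
    · exact Or.inr (Or.inl ⟨h3, by omega⟩)
    · -- pb < pa: 1 = pa qb - pb qa ≥ pa + qa  ⇒ pa ≤ 1 ∧ qa = 0 ⇒ pb = 0
      right; right
      have hz1 : (pb:ℤ) < (pa:ℤ) := by exact_mod_cast h3
      have hz2 : (qa:ℤ) + 1 ≤ qb := by exact_mod_cast h2
      have hpa0 : (0:ℤ) ≤ pa := by positivity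
      have hqa0 : (0:ℤ) ≤ qa := by positivity
      have : (pa:ℤ) + qa ≤ 1 := by nlinarith
      constructor <;> [skip; omega]
      · -- qa = 0 and pa ≤ 1 so pa = 1, pb < 1
        omega
  · -- pa < pb, qb ≤ qa: contradiction
    exfalso
    have hz1 : (pa:ℤ) + 1 ≤ pb := by exact_mod_cast h1
    have hz2 : (qb:ℤ) ≤ qa := by exact_mod_cast h2
    have h0 : (0:ℤ) ≤ qb := by positivity
    have h0' : (0:ℤ) ≤ pb := by positivity
    nlinarith
  · exact Or.inr (Or.inl ⟨by omega, by omega⟩)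

lemma line_up {j t : ℕ} (hj : j ≤ F.n) (ht : t ≤ F.n + 1) (hD : F.D t j = 1) :
    ∃ m : ℕ, (F.p t : ℤ) = F.p (j+1) - m * F.p j ∧ (F.q t : ℤ) = F.q (j+1) - m * F.q j := by
  have hD1 : F.D (j+1) j = 1 := F.Dsucc j hj
  have hD' := hD; unfold D at hD' hD1
  have key : (F.p j : ℤ) * ((F.q (j+1) : ℤ) - F.q t) = ((F.p (j+1) : ℤ) - F.p t) * F.q j := by
    linarith
  obtain ⟨u, v, huv⟩ := F.copr j (by omega)
  have hdvd : (F.q j : ℤ) ∣ ((F.q (j+1) : ℤ) - F.q t) := by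
    have h1' : (F.q j : ℤ) ∣ (F.p j : ℤ) * ((F.q (j+1) : ℤ) - F.q t) := ⟨(F.p (j+1) : ℤ) - F.p t, by linarith⟩
    have hid : ((F.q (j+1) : ℤ) - F.q t) =
        u * ((F.p j : ℤ) * ((F.q (j+1) : ℤ) - F.q t)) + v * F.q j * ((F.q (j+1) : ℤ) - F.q t) := by
      linear_combination ((F.q (j+1) : ℤ) - F.q t) * huv.symm
    rw [hid]
    exact dvd_add (Dvd.dvd.mul_left h1' u) (Dvd.dvd.mul_right (Dvd.dvd.mul_left dvd_rfl v) _)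
  obtain ⟨k, hk⟩ := hdvd
  have hqj : (1:ℤ) ≤ F.q j := by exact_mod_cast F.qpos j hj
  have hqj0 : (F.q j : ℤ) ≠ 0 := by omega
  have hqt : (F.q t : ℤ) = F.q (j+1) - F.q j * k := by omega
  have hpt : (F.p t : ℤ) = F.p (j+1) - F.p j * k := by
    have h2 : ((F.p j : ℤ) * k) * F.q j = ((F.p (j+1) : ℤ) - F.p t) * F.q j := by
      rw [← key, hk]; ring
    have := mul_right_cancel₀ hqj0 h2
    linarith
  have hk0 : 0 ≤ k := by
    by_contra hneg
    push_neg at hneg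
    have hD2 : F.D (j+1) t = -k := by
      unfold D; rw [hpt, hqt]; linear_combination (-k) * hD1
    have h3 : t < j + 1 := F.lt_of_Dpos (j+1) t (by omega) ht (by omega)
    have h4 : j < t := F.lt_of_Dpos t j ht (by omega) (by omega)
    omega
  refine ⟨k.toNat, ?_, ?_⟩
  · rw [Int.toNat_of_nonneg hk0]; linarith
  · rw [Int.toNat_of_nonneg hk0]; linarith

lemma line_down {j' t : ℕ} (hj : j' ≤ F.n) (ht : t ≤ F.n + 1) (hD : F.D (j'+1) t = 1) :
    ∃ m : ℕ, (F.p t : ℤ) = F.p j' - m * F.p (j'+1) ∧ (F.q t : ℤ) = F.q j' - m * F.q (j'+1) := by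
  have hD1 : F.D (j'+1) j' = 1 := F.Dsucc j' hj
  have hD' := hD; unfold D at hD' hD1
  have key : (F.p (j'+1) : ℤ) * ((F.q j' : ℤ) - F.q t) = ((F.p j' : ℤ) - F.p t) * F.q (j'+1) := by
    linarith
  obtain ⟨u, v, huv⟩ := F.copr (j'+1) (by omega)
  have hdvd : (F.p (j'+1) : ℤ) ∣ ((F.p j' : ℤ) - F.p t) := by
    have h1' : (F.p (j'+1) : ℤ) ∣ ((F.p j' : ℤ) - F.p t) * F.q (j'+1) := ⟨(F.q j' : ℤ) - F.q t, by linarith⟩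
    have hid : ((F.p j' : ℤ) - F.p t) =
        u * F.p (j'+1) * ((F.p j' : ℤ) - F.p t) + v * (((F.p j' : ℤ) - F.p t) * F.q (j'+1)) := by
      linear_combination ((F.p j' : ℤ) - F.p t) * huv.symm
    rw [hid]
    exact dvd_add (Dvd.dvd.mul_right (Dvd.dvd.mul_left dvd_rfl u) _) (Dvd.dvd.mul_left h1' v)
  obtain ⟨k, hk⟩ := hdvd
  have hpj : (1:ℤ) ≤ F.p (j'+1) := by exact_mod_cast F.ppos (j'+1) (by omega) (by omega)
  have hpj0 : (F.p (j'+1) : ℤ) ≠ 0 := by omega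
  have hpt : (F.p t : ℤ) = F.p j' - F.p (j'+1) * k := by omega
  have hqt : (F.q t : ℤ) = F.q j' - F.q (j'+1) * k := by
    have h2 : (F.p (j'+1) : ℤ) * ((F.q (j'+1) : ℤ) * k) = (F.p (j'+1) : ℤ) * ((F.q j' : ℤ) - F.q t) := by
      rw [key, hk]; ring
    have := mul_left_cancel₀ hpj0 h2
    linarith
  have hk0 : 0 ≤ k := by
    by_contra hneg
    push_neg at hneg
    have hD2 : F.D t j' = -k := by
      unfold D; rw [hpt, hqt]; linear_combination (-k) * hD1
    have h3 : j' < t := F.lt_of_Dpos t j' ht (by omega) (by omega)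
    have h4 : t < j' + 1 := F.lt_of_Dpos (j'+1) t (by omega) ht (by omega)
    omega
  refine ⟨k.toNat, ?_, ?_⟩
  · rw [Int.toNat_of_nonneg hk0]; linarith
  · rw [Int.toNat_of_nonneg hk0]; linarith

def rup (j : ℕ) : ℕ := if j = 0 then F.n + 1 else F.j₂ j

lemma rup_le {j : ℕ} (hj : j ≤ F.n) : F.rup j ≤ F.n + 1 := by
  unfold rup; split_ifs with h
  · omega
  · exact F.hj₂ j (by omega) hj

lemma Drup {j : ℕ} (hj : j ≤ F.n) : F.D (F.rup j) j = 1 := by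
  unfold rup; split_ifs with h
  · subst h; unfold D; simp [F.hpn, F.hqn, F.hp0, F.hq0]
  · rw [F.Dskew]; have := Dj2 (F := F) (by omega) hj; omega

lemma rup_boxq {j : ℕ} (hj : j ≤ F.n) : F.q (F.rup j) ≤ F.q j := by
  unfold rup; split_ifs with h
  · subst h; rw [F.hqn, F.hq0]; omega
  · exact box2q (by omega) hj

lemma ray_up {j : ℕ} (hj : j ≤ F.n) :
    ∃ m₀ : ℕ,
      ((F.p (F.rup j) : ℤ) = F.p (j+1) - m₀ * F.p j ∧
       (F.q (F.rup j) : ℤ) = F.q (j+1) - m₀ * F.q j) ∧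
      (∀ m : ℕ, m < m₀ → ∃ t, 1 ≤ t ∧ t ≤ F.n ∧ F.j₁ t = j ∧
         (F.p t : ℤ) = F.p (j+1) - m * F.p j ∧ (F.q t : ℤ) = F.q (j+1) - m * F.q j) ∧
      (∀ t, 1 ≤ t → t ≤ F.n → F.j₁ t = j → ∃ m : ℕ, m < m₀ ∧
         (F.p t : ℤ) = F.p (j+1) - m * F.p j ∧ (F.q t : ℤ) = F.q (j+1) - m * F.q j) ∧
      ((Finset.Icc 1 F.n).filter (fun t => j = F.j₁ t)).card = m₀ := by
  obtain ⟨m₀, hAp, hAq⟩ := F.line_up hj (F.rup_le hj) (F.Drup hj)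
  have hD1 := F.Dsucc j hj
  unfold D at hD1
  have hqjz : (1:ℤ) ≤ F.q j := by exact_mod_cast F.qpos j hj
  have hrbq : (F.q (F.rup j) : ℤ) ≤ F.q j := by exact_mod_cast F.rup_boxq hj
  -- step: any present point at level m < m₀ is a child of j
  have step : ∀ m t, m < m₀ → t ≤ F.n + 1 →
      (F.p t : ℤ) = F.p (j+1) - m * F.p j → (F.q t : ℤ) = F.q (j+1) - m * F.q j →
      1 ≤ t ∧ t ≤ F.n ∧ F.j₁ t = j := by
    intro m t hm ht hpt hqt
    have hDtj : F.D t j = 1 := by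
      unfold D; rw [hpt, hqt]; linear_combination hD1
    have hne : ¬ ((F.p t : ℤ) = F.p (F.rup j) ∧ (F.q t : ℤ) = F.q (F.rup j)) := by
      rintro ⟨hp', hq'⟩
      have h0 : ((m₀:ℤ) - m) * F.q j = 0 := by linear_combination hAq - hqt + hq'
      have h1 : (m₀:ℤ) = m := by
        rcases mul_eq_zero.mp h0 with h | h
        · linarith
        · omega
      have : m₀ = m := by exact_mod_cast h1
      omega
    have hDtj' := hDtj; unfold D at hDtj'
    rcases comparZ (F.p t) (F.q t) (F.p j) (F.q j) hDtj' with hbox | hbox | hbox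
    · -- box (j ≤ t): child
      have ht1 : 1 ≤ t := by
        have := F.lt_of_Dpos t j ht (by omega) (by omega); omega
      have ht2 : t ≤ F.n := by
        by_contra h'
        have htn : t = F.n + 1 := by omega
        subst htn
        rw [F.hqn] at hbox
        have := F.qpos j hj
        omega
      exact ⟨ht1, ht2, (F.char1 ht1 ht2 (by omega) hDtj hbox.1 hbox.2).symm⟩
    · -- box (t ≤ j)
      exfalso
      rcases Nat.eq_zero_or_pos j with rfl | hj1
      · have hpt1 : (F.p t : ℤ) = 1 := by
          rw [hpt, F.p1, F.hp0]; push_cast; ring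
        have := hbox.1; rw [F.hp0] at this
        have : (F.p t : ℤ) = 0 := by omega
        omega
      · have hDjt : F.D j t = -1 := by rw [F.Dskew]; omega
        have hteq : t = F.j₂ j := F.char2 hj1 hj ht hDjt hbox.1 hbox.2
        have hru : F.rup j = F.j₂ j := by unfold rup; rw [if_neg (by omega)]
        exact hne (by rw [hteq, hru]; exact ⟨rfl, rfl⟩)
    · -- p j = 0 ∧ q t = 0
      exfalso
      rcases Nat.eq_zero_or_pos j with rfl | hj1
      · have htn : t = F.n + 1 := by
          by_contra h'
          have := F.qpos t (by omega)
          omega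
        have hru : F.rup 0 = F.n + 1 := by unfold rup; rw [if_pos rfl]
        exact hne (by rw [htn, hru]; exact ⟨rfl, rfl⟩)
      · have := F.ppos j hj1 (by omega); omega
  -- presence of all levels m ≤ m₀
  have pres : ∀ m, m ≤ m₀ → ∃ t, t ≤ F.n + 1 ∧
      (F.p t : ℤ) = F.p (j+1) - m * F.p j ∧ (F.q t : ℤ) = F.q (j+1) - m * F.q j := by
    intro m
    induction m with
    | zero => intro _; exact ⟨j+1, by omega, by push_cast; ring, by push_cast; ring⟩
    | succ m ih =>
      intro hm
      obtain ⟨t, ht, hpt, hqt⟩ := ih (by omega)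
      obtain ⟨ht1, ht2, hjt⟩ := step m t (by omega) ht hpt hqt
      obtain ⟨hps, hqs, -⟩ := F.hparent t ht1 ht2
      have hpz : (F.p (F.j₁ t) : ℤ) + F.p (F.j₂ t) = F.p t := by exact_mod_cast hps
      have hqz : (F.q (F.j₁ t) : ℤ) + F.q (F.j₂ t) = F.q t := by exact_mod_cast hqs
      rw [hjt] at hpz hqz
      refine ⟨F.j₂ t, F.hj₂ t ht1 ht2, by push_cast; linarith, by push_cast; linarith⟩
  have hB : ∀ m : ℕ, m < m₀ → ∃ t, 1 ≤ t ∧ t ≤ F.n ∧ F.j₁ t = j ∧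
      (F.p t : ℤ) = F.p (j+1) - m * F.p j ∧ (F.q t : ℤ) = F.q (j+1) - m * F.q j := by
    intro m hm
    obtain ⟨t, ht, hpt, hqt⟩ := pres m (by omega)
    obtain ⟨h1, h2, h3⟩ := step m t hm ht hpt hqt
    exact ⟨t, h1, h2, h3, hpt, hqt⟩
  have hC : ∀ t, 1 ≤ t → t ≤ F.n → F.j₁ t = j → ∃ m : ℕ, m < m₀ ∧
      (F.p t : ℤ) = F.p (j+1) - m * F.p j ∧ (F.q t : ℤ) = F.q (j+1) - m * F.q j := by
    intro t ht1 ht2 hjt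
    have hDtj : F.D t j = 1 := by rw [← hjt]; exact Dj1 ht1 ht2
    obtain ⟨m, hpt, hqt⟩ := F.line_up hj (by omega) hDtj
    have hboxq : (F.q j : ℤ) ≤ F.q t := by
      have := box1q (F := F) ht1 ht2; rw [hjt] at this; exact_mod_cast this
    have hboxp : (F.p j : ℤ) ≤ F.p t := by
      have := box1p (F := F) ht1 ht2; rw [hjt] at this; exact_mod_cast this
    have h0 : ((m₀:ℤ) - m) * F.q j ≥ 0 := by
      have : ((m₀:ℤ) - m) * F.q j = (F.q t : ℤ) - F.q (F.rup j) := by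
        linear_combination hAq - hqt
      rw [this]; linarith
    have hmle : (m:ℤ) ≤ m₀ := by nlinarith [h0, hqjz]
    have hmne : m ≠ m₀ := by
      intro heq
      subst heq
      have hteq : t = F.rup j := by
        refine F.inj t (F.rup j) (by omega) (F.rup_le hj) ?_ ?_
        · rw [hpt, hAp]
        · rw [hqt, hAq]
      rcases Nat.eq_zero_or_pos j with rfl | hj1
      · have : F.rup 0 = F.n + 1 := by unfold rup; rw [if_pos rfl]
        omega
      · have hru : F.rup j = F.j₂ j := by unfold rup; rw [if_neg (by omega)]
        have hrbp : (F.p (F.rup j) : ℤ) ≤ F.p j := by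
          rw [hru]; exact_mod_cast box2p hj1 hj
        have hpeq : (F.p t : ℤ) = F.p j := by
          have : (F.p t : ℤ) = F.p (F.rup j) := by rw [hteq]
          omega
        have hqeq : (F.q t : ℤ) = F.q j := by
          have : (F.q t : ℤ) = F.q (F.rup j) := by rw [hteq]
          omega
        have : t = j := F.inj t j (by omega) (by omega) hpeq hqeq
        subst this
        rw [F.Ddiag] at hDtj
        omega
    have : (m:ℤ) < m₀ := by
      rcases lt_or_eq_of_le hmle with h | h
      · exact h
      · exact absurd (by exact_mod_cast h) hmne
    exact ⟨m, by exact_mod_cast this, hpt, hqt⟩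
  refine ⟨m₀, ⟨hAp, hAq⟩, hB, hC, ?_⟩
  -- cardinality via bijection with range m₀
  have hmem : ∀ t, t ∈ (Finset.Icc 1 F.n).filter (fun t => j = F.j₁ t) →
      ∃ m : ℕ, m < m₀ ∧
      (F.p t : ℤ) = F.p (j+1) - m * F.p j ∧ (F.q t : ℤ) = F.q (j+1) - m * F.q j := by
    intro t ht
    obtain ⟨hI, hjt⟩ := Finset.mem_filter.mp ht
    obtain ⟨h1, h2⟩ := Finset.mem_Icc.mp hI
    exact hC t h1 h2 hjt.symm
  have hmem' : ∀ m, m ∈ Finset.range m₀ → ∃ t, 1 ≤ t ∧ t ≤ F.n ∧ F.j₁ t = j ∧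
      (F.p t : ℤ) = F.p (j+1) - m * F.p j ∧ (F.q t : ℤ) = F.q (j+1) - m * F.q j :=
    fun m hm => hB m (Finset.mem_range.mp hm)
  classical
  set f : ℕ → ℕ := fun m => if h : m < m₀ then (hB m h).choose else 0 with hf
  have hfval : ∀ m (h : m < m₀), 1 ≤ f m ∧ f m ≤ F.n ∧ F.j₁ (f m) = j ∧
      (F.p (f m) : ℤ) = F.p (j+1) - m * F.p j ∧ (F.q (f m) : ℤ) = F.q (j+1) - m * F.q j := by
    intro m h
    rw [hf]; simp only [dif_pos h]
    exact (hB m h).choose_spec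
  have himg : (Finset.Icc 1 F.n).filter (fun t => j = F.j₁ t) = (Finset.range m₀).image f := by
    ext t
    simp only [Finset.mem_filter, Finset.mem_image, Finset.mem_range, Finset.mem_Icc]
    constructor
    · rintro ⟨⟨h1, h2⟩, hjt⟩
      obtain ⟨m, hm, hpt, hqt⟩ := hC t h1 h2 hjt.symm
      refine ⟨m, hm, ?_⟩
      obtain ⟨g1, g2, g3, gp, gq⟩ := hfval m hm
      exact F.inj (f m) t (by omega) (by omega) (by rw [gp, hpt]) (by rw [gq, hqt])
    · rintro ⟨m, hm, rfl⟩
      obtain ⟨g1, g2, g3, -, -⟩ := hfval m hm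
      exact ⟨⟨g1, g2⟩, g3.symm⟩
  rw [himg]
  rw [Finset.card_image_of_injOn, Finset.card_range]
  intro m1 h1 m2 h2 heq
  rw [Finset.mem_coe, Finset.mem_range] at h1 h2
  obtain ⟨-, -, -, -, gq1⟩ := hfval m1 h1
  obtain ⟨-, -, -, -, gq2⟩ := hfval m2 h2
  rw [heq] at gq1
  have h0 : ((m1:ℤ) - m2) * F.q j = 0 := by linear_combination gq1 - gq2
  have : (m1:ℤ) = m2 := by
    rcases mul_eq_zero.mp h0 with h | h
    · linarith
    · omega
  exact_mod_cast this

def rdn (j : ℕ) : ℕ := if j = F.n + 1 then 0 else F.j₁ j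

lemma rdn_le {j' : ℕ} (hj : j' ≤ F.n) : F.rdn (j'+1) ≤ F.n + 1 := by
  unfold rdn; split_ifs with h
  · omega
  · exact F.hj₁ (j'+1) (by omega) (by omega)

lemma Drdn {j' : ℕ} (hj : j' ≤ F.n) : F.D (j'+1) (F.rdn (j'+1)) = 1 := by
  unfold rdn; split_ifs with h
  · rw [h]; unfold D; simp [F.hpn, F.hqn, F.hp0, F.hq0]
  · exact Dj1 (by omega) (by omega)

lemma rdn_boxp {j' : ℕ} (hj : j' ≤ F.n) : F.p (F.rdn (j'+1)) ≤ F.p (j'+1) := by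
  unfold rdn; split_ifs with h
  · rw [F.hp0]; omega
  · exact box1p (by omega) (by omega)

lemma ray_down {j' : ℕ} (hj : j' ≤ F.n) :
    ∃ m₁ : ℕ,
      ((F.p (F.rdn (j'+1)) : ℤ) = F.p j' - m₁ * F.p (j'+1) ∧
       (F.q (F.rdn (j'+1)) : ℤ) = F.q j' - m₁ * F.q (j'+1)) ∧
      (∀ m : ℕ, m < m₁ → ∃ t, 1 ≤ t ∧ t ≤ F.n ∧ F.j₂ t = j'+1 ∧
         (F.p t : ℤ) = F.p j' - m * F.p (j'+1) ∧ (F.q t : ℤ) = F.q j' - m * F.q (j'+1)) ∧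
      (∀ t, 1 ≤ t → t ≤ F.n → F.j₂ t = j'+1 → ∃ m : ℕ, m < m₁ ∧
         (F.p t : ℤ) = F.p j' - m * F.p (j'+1) ∧ (F.q t : ℤ) = F.q j' - m * F.q (j'+1)) ∧
      ((Finset.Icc 1 F.n).filter (fun t => j'+1 = F.j₂ t)).card = m₁ := by
  obtain ⟨m₁, hAp, hAq⟩ := F.line_down hj (F.rdn_le hj) (F.Drdn hj)
  have hD1 := F.Dsucc j' hj
  unfold D at hD1
  have hpjz : (1:ℤ) ≤ F.p (j'+1) := by exact_mod_cast F.ppos (j'+1) (by omega) (by omega)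
  have hrbp : (F.p (F.rdn (j'+1)) : ℤ) ≤ F.p (j'+1) := by exact_mod_cast F.rdn_boxp hj
  have step : ∀ m t, m < m₁ → t ≤ F.n + 1 →
      (F.p t : ℤ) = F.p j' - m * F.p (j'+1) → (F.q t : ℤ) = F.q j' - m * F.q (j'+1) →
      1 ≤ t ∧ t ≤ F.n ∧ F.j₂ t = j'+1 := by
    intro m t hm ht hpt hqt
    have hDjt : F.D (j'+1) t = 1 := by
      unfold D; rw [hpt, hqt]; linear_combination hD1
    have hne : ¬ ((F.p t : ℤ) = F.p (F.rdn (j'+1)) ∧ (F.q t : ℤ) = F.q (F.rdn (j'+1))) := by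
      rintro ⟨hp', hq'⟩
      have h0 : ((m₁:ℤ) - m) * F.p (j'+1) = 0 := by linear_combination hAp - hpt + hp'
      have h1 : (m₁:ℤ) = m := by
        rcases mul_eq_zero.mp h0 with h | h
        · linarith
        · omega
      have : m₁ = m := by exact_mod_cast h1
      omega
    have hDjt' := hDjt; unfold D at hDjt'
    rcases comparZ (F.p (j'+1)) (F.q (j'+1)) (F.p t) (F.q t) hDjt' with hbox | hbox | hbox
    · -- box (t ≤ j'+1) : t is rdn, contradiction
      exfalso
      by_cases htop : j' = F.n
      · subst htop
        have hq0' := hbox.2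
        rw [F.hqn] at hq0'
        have htn : t = F.n + 1 := by
          by_contra h'
          have := F.qpos t (by omega)
          omega
        rw [htn, F.Ddiag] at hDjt
        omega
      · have hteq : t = F.j₁ (j'+1) :=
          F.char1 (by omega) (by omega) ht hDjt hbox.1 hbox.2
        have hru : F.rdn (j'+1) = F.j₁ (j'+1) := by unfold rdn; rw [if_neg (by omega)]
        exact hne (by rw [hteq, hru]; exact ⟨rfl, rfl⟩)
    · -- box (j'+1 ≤ t) : child
      have ht1 : 1 ≤ t := by
        by_contra h'
        have ht0 : t = 0 := by omega
        rw [ht0, F.hp0] at hbox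
        have := F.ppos (j'+1) (by omega) (by omega)
        omega
      have ht2 : t ≤ F.n := by
        have := F.lt_of_Dpos (j'+1) t (by omega) ht (by omega); omega
      have hDt : F.D t (j'+1) = -1 := by rw [F.Dskew]; omega
      exact ⟨ht1, ht2, (F.char2 ht1 ht2 (by omega) hDt hbox.1 hbox.2).symm⟩
    · -- p t = 0 ∧ q (j'+1) = 0
      exfalso
      have hjn : j' = F.n := by
        by_contra h'
        have := F.qpos (j'+1) (by omega)
        omega
      have ht0 : t = 0 := by
        by_contra h'
        have := F.ppos t (by omega) ht
        omega
      have hru : F.rdn (j'+1) = 0 := by unfold rdn; rw [if_pos (by omega)]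
      exact hne (by rw [ht0, hru]; exact ⟨rfl, rfl⟩)
  have pres : ∀ m, m ≤ m₁ → ∃ t, t ≤ F.n + 1 ∧
      (F.p t : ℤ) = F.p j' - m * F.p (j'+1) ∧ (F.q t : ℤ) = F.q j' - m * F.q (j'+1) := by
    intro m
    induction m with
    | zero => intro _; exact ⟨j', by omega, by push_cast; ring, by push_cast; ring⟩
    | succ m ih =>
      intro hm
      obtain ⟨t, ht, hpt, hqt⟩ := ih (by omega)
      obtain ⟨ht1, ht2, hjt⟩ := step m t (by omega) ht hpt hqt
      obtain ⟨hps, hqs, -⟩ := F.hparent t ht1 ht2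
      have hpz : (F.p (F.j₁ t) : ℤ) + F.p (F.j₂ t) = F.p t := by exact_mod_cast hps
      have hqz : (F.q (F.j₁ t) : ℤ) + F.q (F.j₂ t) = F.q t := by exact_mod_cast hqs
      rw [hjt] at hpz hqz
      refine ⟨F.j₁ t, F.hj₁ t ht1 ht2, by push_cast; linarith, by push_cast; linarith⟩
  have hB : ∀ m : ℕ, m < m₁ → ∃ t, 1 ≤ t ∧ t ≤ F.n ∧ F.j₂ t = j'+1 ∧
      (F.p t : ℤ) = F.p j' - m * F.p (j'+1) ∧ (F.q t : ℤ) = F.q j' - m * F.q (j'+1) := by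
    intro m hm
    obtain ⟨t, ht, hpt, hqt⟩ := pres m (by omega)
    obtain ⟨h1, h2, h3⟩ := step m t hm ht hpt hqt
    exact ⟨t, h1, h2, h3, hpt, hqt⟩
  have hC : ∀ t, 1 ≤ t → t ≤ F.n → F.j₂ t = j'+1 → ∃ m : ℕ, m < m₁ ∧
      (F.p t : ℤ) = F.p j' - m * F.p (j'+1) ∧ (F.q t : ℤ) = F.q j' - m * F.q (j'+1) := by
    intro t ht1 ht2 hjt
    have hDt : F.D t (j'+1) = -1 := by rw [← hjt]; exact Dj2 ht1 ht2
    have hDjt : F.D (j'+1) t = 1 := by rw [F.Dskew]; omega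
    obtain ⟨m, hpt, hqt⟩ := F.line_down hj (by omega) hDjt
    have hboxp : (F.p (j'+1) : ℤ) ≤ F.p t := by
      have := box2p (F := F) ht1 ht2; rw [hjt] at this; exact_mod_cast this
    have hboxq : (F.q (j'+1) : ℤ) ≤ F.q t := by
      have := box2q (F := F) ht1 ht2; rw [hjt] at this; exact_mod_cast this
    have h0 : ((m₁:ℤ) - m) * F.p (j'+1) ≥ 0 := by
      have : ((m₁:ℤ) - m) * F.p (j'+1) = (F.p t : ℤ) - F.p (F.rdn (j'+1)) := by
        linear_combination hAp - hpt
      rw [this]; linarith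
    have hmle : (m:ℤ) ≤ m₁ := by nlinarith [h0, hpjz]
    have hmne : m ≠ m₁ := by
      intro heq
      subst heq
      have hteq : t = F.rdn (j'+1) := by
        refine F.inj t (F.rdn (j'+1)) (by omega) (F.rdn_le hj) ?_ ?_
        · rw [hpt, hAp]
        · rw [hqt, hAq]
      by_cases htop : j' = F.n
      · have : F.rdn (j'+1) = 0 := by unfold rdn; rw [if_pos (by omega)]
        omega
      · have hru : F.rdn (j'+1) = F.j₁ (j'+1) := by unfold rdn; rw [if_neg (by omega)]
        have hrbq : (F.q (F.rdn (j'+1)) : ℤ) ≤ F.q (j'+1) := by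
          rw [hru]; exact_mod_cast box1q (by omega) (by omega)
        have hpeq : (F.p t : ℤ) = F.p (j'+1) := by
          have : (F.p t : ℤ) = F.p (F.rdn (j'+1)) := by rw [hteq]
          omega
        have hqeq : (F.q t : ℤ) = F.q (j'+1) := by
          have : (F.q t : ℤ) = F.q (F.rdn (j'+1)) := by rw [hteq]
          omega
        have : t = j'+1 := F.inj t (j'+1) (by omega) (by omega) hpeq hqeq
        subst this
        rw [F.Ddiag] at hDt
        omega
    have : (m:ℤ) < m₁ := by
      rcases lt_or_eq_of_le hmle with h | h
      · exact h
      · exact absurd (by exact_mod_cast h) hmne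
    exact ⟨m, by exact_mod_cast this, hpt, hqt⟩
  refine ⟨m₁, ⟨hAp, hAq⟩, hB, hC, ?_⟩
  classical
  set f : ℕ → ℕ := fun m => if h : m < m₁ then (hB m h).choose else 0 with hf
  have hfval : ∀ m (h : m < m₁), 1 ≤ f m ∧ f m ≤ F.n ∧ F.j₂ (f m) = j'+1 ∧
      (F.p (f m) : ℤ) = F.p j' - m * F.p (j'+1) ∧ (F.q (f m) : ℤ) = F.q j' - m * F.q (j'+1) := by
    intro m h
    rw [hf]; simp only [dif_pos h]
    exact (hB m h).choose_spec
  have himg : (Finset.Icc 1 F.n).filter (fun t => j'+1 = F.j₂ t) = (Finset.range m₁).image f := by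
    ext t
    simp only [Finset.mem_filter, Finset.mem_image, Finset.mem_range, Finset.mem_Icc]
    constructor
    · rintro ⟨⟨h1, h2⟩, hjt⟩
      obtain ⟨m, hm, hpt, hqt⟩ := hC t h1 h2 hjt.symm
      refine ⟨m, hm, ?_⟩
      obtain ⟨g1, g2, g3, gp, gq⟩ := hfval m hm
      exact F.inj (f m) t (by omega) (by omega) (by rw [gp, hpt]) (by rw [gq, hqt])
    · rintro ⟨m, hm, rfl⟩
      obtain ⟨g1, g2, g3, -, -⟩ := hfval m hm
      exact ⟨⟨g1, g2⟩, g3.symm⟩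
  rw [himg]
  rw [Finset.card_image_of_injOn, Finset.card_range]
  intro m1 h1 m2 h2 heq
  rw [Finset.mem_coe, Finset.mem_range] at h1 h2
  obtain ⟨-, -, -, gp1, -⟩ := hfval m1 h1
  obtain ⟨-, -, -, gp2, -⟩ := hfval m2 h2
  rw [heq] at gp1
  have h0 : ((m1:ℤ) - m2) * F.p (j'+1) = 0 := by linear_combination gp1 - gp2
  have : (m1:ℤ) = m2 := by
    rcases mul_eq_zero.mp h0 with h | h
    · linarith
    · omega
  exact_mod_cast this

end FC

set_option maxHeartbeats 1600000 in
/-- Intersection pattern of the Σ-vectors of a Farey chain with a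
parent assignment (standard dot product over coordinates `1 ≤ t ≤ n`). -/
theorem sigma_intersection_pattern (n : ℕ) (hn : 1 ≤ n) (p q : ℕ → ℕ)
    (hp0 : p 0 = 0) (hq0 : q 0 = 1)
    (hpn : p (n + 1) = 1) (hqn : q (n + 1) = 0)
    (hfarey : ∀ i ≤ n, p (i + 1) * q i = p i * q (i + 1) + 1)
    (j₁ j₂ : ℕ → ℕ)
    (hj₁ : ∀ i, 1 ≤ i → i ≤ n → j₁ i ≤ n + 1)
    (hj₂ : ∀ i, 1 ≤ i → i ≤ n → j₂ i ≤ n + 1)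
    (hparent : ∀ i, 1 ≤ i → i ≤ n →
      p (j₁ i) + p (j₂ i) = p i ∧ q (j₁ i) + q (j₂ i) = q i ∧
        p i * q (j₁ i) = p (j₁ i) * q i + 1)
    (s : ℕ → ℕ → ℤ)
    (hs : ∀ j t, 1 ≤ t → t ≤ n →
      s j t = if j = t then -1 else if j = j₁ t ∨ j = j₂ t then 1 else 0) :
    (∀ j, 1 ≤ j → j ≤ n →
        (∑ t ∈ Finset.Icc 1 n, s j t * s j t) =
          (p (j + 1) : ℤ) * (q (j - 1) : ℤ) - (p (j - 1) : ℤ) * (q (j + 1) : ℤ)) ∧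
    (∑ t ∈ Finset.Icc 1 n, s 0 t * s 0 t) = (q 1 : ℤ) ∧
    (∑ t ∈ Finset.Icc 1 n, s (n + 1) t * s (n + 1) t) = (p n : ℤ) ∧
    (∀ j ≤ n, (∑ t ∈ Finset.Icc 1 n, s j t * s (j + 1) t) = -1) ∧
    (∑ t ∈ Finset.Icc 1 n, s 0 t * s (n + 1) t) = 1 ∧
    (∀ j l, j < l → l ≤ n + 1 → 2 ≤ l - j → (j, l) ≠ (0, n + 1) →
        (∑ t ∈ Finset.Icc 1 n, s j t * s l t) = 0) := by
  classical
  set F : FC := ⟨n, hn, p, q, j₁, j₂, hp0, hq0, hpn, hqn, hfarey, hj₁, hj₂, hparent⟩ with hF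
  have hFn : F.n = n := rfl
  have hFp : F.p = p := rfl
  have hFq : F.q = q := rfl
  have hFj₁ : F.j₁ = j₁ := rfl
  have hFj₂ : F.j₂ = j₂ := rfl
  have hFD : ∀ a b, F.D a b = (p a : ℤ) * q b - (p b : ℤ) * q a := fun a b => rfl
  -- convenient facts in the ambient notation
  have hlt1 : ∀ t, 1 ≤ t → t ≤ n → j₁ t < t := by
    intro t h1 h2
    have h := FC.j1_lt (F := F) h1 h2
    rwa [hFj₁] at h
  have hlt2 : ∀ t, 1 ≤ t → t ≤ n → t < j₂ t := by
    intro t h1 h2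
    have h := FC.j2_gt (F := F) h1 h2
    rwa [hFj₂] at h
  have hqpos : ∀ i, i ≤ n → 1 ≤ q i := by
    intro i hi
    have h := F.qpos i hi
    rwa [hFq] at h
  have hppos : ∀ i, 1 ≤ i → i ≤ n + 1 → 1 ≤ p i := by
    intro i h1 h2
    have h := F.ppos i h1 h2
    rwa [hFp] at h
  have hinj : ∀ a b, a ≤ n + 1 → b ≤ n + 1 → (p a : ℤ) = p b → (q a : ℤ) = q b → a = b := by
    intro a b ha hb h1 h2
    exact F.inj a b ha hb (by rwa [hFp]) (by rwa [hFq])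
  have hp1 : p 1 = 1 := by have := F.p1; rwa [hFp] at this
  -- ====================== diagonal, interior =========================
  have claim1 : ∀ j, 1 ≤ j → j ≤ n →
      (∑ t ∈ Finset.Icc 1 n, s j t * s j t) =
        (p (j + 1) : ℤ) * (q (j - 1) : ℤ) - (p (j - 1) : ℤ) * (q (j + 1) : ℤ) := by
    intro j hj1 hjn
    obtain ⟨j', rfl⟩ : ∃ j', j = j' + 1 := ⟨j - 1, by omega⟩
    have key : ∀ t ∈ Finset.Icc 1 n, s (j'+1) t * s (j'+1) t =
        (if j'+1 = t then (1:ℤ) else 0) +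
        ((if j'+1 = j₁ t then (1:ℤ) else 0) + (if j'+1 = j₂ t then (1:ℤ) else 0)) := by
      intro t ht
      rw [Finset.mem_Icc] at ht
      rw [hs (j'+1) t ht.1 ht.2]
      have h1 := hlt1 t ht.1 ht.2
      have h2 := hlt2 t ht.1 ht.2
      split_ifs <;> first | omega | norm_num | (exfalso; omega)
    rw [Finset.sum_congr rfl key]
    rw [Finset.sum_add_distrib, Finset.sum_add_distrib, Finset.sum_ite_eq,
      Finset.sum_boole, Finset.sum_boole]
    obtain ⟨m₀, ⟨up_p, up_q⟩, -, -, upCard⟩ := F.ray_up (j := j'+1) hjn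
    obtain ⟨m₁, ⟨dn_p, dn_q⟩, -, -, dnCard⟩ := F.ray_down (j' := j') (by omega)
    have hru : F.rup (j'+1) = F.j₂ (j'+1) := by unfold FC.rup; rw [if_neg (by omega)]
    have hrd : F.rdn (j'+1) = F.j₁ (j'+1) := by unfold FC.rdn; rw [if_neg (by omega)]
    rw [hru] at up_p up_q
    rw [hrd] at dn_p dn_q
    simp only [hFp, hFq, hFj₁, hFj₂, hFn] at up_p up_q dn_p dn_q upCard dnCard
    rw [upCard, dnCard]
    rw [if_pos (Finset.mem_Icc.mpr ⟨by omega, hjn⟩)]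
    -- now pure algebra
    obtain ⟨hps, hqs, -⟩ := hparent (j'+1) (by omega) hjn
    have hpz : (p (j₁ (j'+1)) : ℤ) + p (j₂ (j'+1)) = p (j'+1) := by exact_mod_cast hps
    have hqz : (q (j₁ (j'+1)) : ℤ) + q (j₂ (j'+1)) = q (j'+1) := by exact_mod_cast hqs
    have hD1 : (p (j'+1+1) : ℤ) * q (j'+1) - (p (j'+1) : ℤ) * q (j'+1+1) = 1 := by
      have := hfarey (j'+1) hjn
      have h' : (p (j'+1+1) : ℤ) * q (j'+1) = (p (j'+1) : ℤ) * q (j'+1+1) + 1 := by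
        exact_mod_cast this
      linarith
    have hq' : (q j' : ℤ) + q (j'+1+1) = (1 + (m₀:ℤ) + m₁) * q (j'+1) := by
      linear_combination hqz - up_q - dn_q
    have hp' : (p j' : ℤ) + p (j'+1+1) = (1 + (m₀:ℤ) + m₁) * p (j'+1) := by
      linear_combination hpz - up_p - dn_p
    have hsub : j' + 1 - 1 = j' := by omega
    rw [hsub]
    push_cast
    linear_combination (q (j'+1+1) : ℤ) * hp' - (p (j'+1+1) : ℤ) * hq' - (1 + (m₀:ℤ) + m₁) * hD1
  -- ====================== diagonal at 0 =========================
  have claim2a : (∑ t ∈ Finset.Icc 1 n, s 0 t * s 0 t) = (q 1 : ℤ) := by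
    have key : ∀ t ∈ Finset.Icc 1 n, s 0 t * s 0 t =
        (if 0 = t then (1:ℤ) else 0) +
        ((if 0 = j₁ t then (1:ℤ) else 0) + (if 0 = j₂ t then (1:ℤ) else 0)) := by
      intro t ht
      rw [Finset.mem_Icc] at ht
      rw [hs 0 t ht.1 ht.2]
      have h1 := hlt1 t ht.1 ht.2
      have h2 := hlt2 t ht.1 ht.2
      split_ifs <;> first | omega | norm_num | (exfalso; omega)
    rw [Finset.sum_congr rfl key]
    rw [Finset.sum_add_distrib, Finset.sum_add_distrib, Finset.sum_ite_eq,
      Finset.sum_boole, Finset.sum_boole]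
    obtain ⟨m₀, ⟨up_p, up_q⟩, -, -, upCard⟩ := F.ray_up (j := 0) (by omega)
    have hru : F.rup 0 = F.n + 1 := by unfold FC.rup; rw [if_pos rfl]
    rw [hru] at up_q
    simp only [hFp, hFq, hFj₁, hFj₂, hFn] at up_q upCard
    rw [hqn, hq0] at up_q
    have hm : (m₀ : ℤ) = q 1 := by push_cast at up_q ⊢; linarith
    rw [upCard]
    have hempty : ((Finset.Icc 1 n).filter (fun t => 0 = j₂ t)).card = 0 := by
      rw [Finset.card_eq_zero, Finset.filter_eq_empty_iff]
      intro t ht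
      rw [Finset.mem_Icc] at ht
      have := hlt2 t ht.1 ht.2
      omega
    rw [hempty]
    rw [if_neg (by simp)]
    push_cast
    linarith
  -- ====================== diagonal at n+1 =========================
  have claim2b : (∑ t ∈ Finset.Icc 1 n, s (n+1) t * s (n+1) t) = (p n : ℤ) := by
    have key : ∀ t ∈ Finset.Icc 1 n, s (n+1) t * s (n+1) t =
        (if n+1 = t then (1:ℤ) else 0) +
        ((if n+1 = j₁ t then (1:ℤ) else 0) + (if n+1 = j₂ t then (1:ℤ) else 0)) := by
      intro t ht
      rw [Finset.mem_Icc] at ht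
      rw [hs (n+1) t ht.1 ht.2]
      have h1 := hlt1 t ht.1 ht.2
      have h2 := hlt2 t ht.1 ht.2
      split_ifs <;> first | omega | norm_num | (exfalso; omega)
    rw [Finset.sum_congr rfl key]
    rw [Finset.sum_add_distrib, Finset.sum_add_distrib, Finset.sum_ite_eq,
      Finset.sum_boole, Finset.sum_boole]
    obtain ⟨m₁, ⟨dn_p, dn_q⟩, -, -, dnCard⟩ := F.ray_down (j' := n) (by omega)
    have hrd : F.rdn (n+1) = 0 := by unfold FC.rdn; rw [if_pos (by rw [hFn])]
    rw [hrd] at dn_p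
    simp only [hFp, hFq, hFj₁, hFj₂, hFn] at dn_p dnCard
    rw [hp0, hpn] at dn_p
    have hm : (m₁ : ℤ) = p n := by push_cast at dn_p ⊢; linarith
    rw [dnCard]
    have hempty : ((Finset.Icc 1 n).filter (fun t => n+1 = j₁ t)).card = 0 := by
      rw [Finset.card_eq_zero, Finset.filter_eq_empty_iff]
      intro t ht
      rw [Finset.mem_Icc] at ht
      have := hlt1 t ht.1 ht.2
      omega
    rw [hempty]
    rw [if_neg (by simp)]
    push_cast
    linarith
  -- ====================== adjacent =========================
  have claim3 : ∀ j ≤ n, (∑ t ∈ Finset.Icc 1 n, s j t * s (j + 1) t) = -1 := by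
    intro j hj
    have hD1 : (p (j+1) : ℤ) * q j - (p j : ℤ) * q (j+1) = 1 := by
      have := hfarey j hj
      have h' : (p (j+1) : ℤ) * q j = (p j : ℤ) * q (j+1) + 1 := by exact_mod_cast this
      linarith
    have hDF : F.D (j+1) j = 1 := by rw [hFD]; exact hD1
    rcases FC.comparZ (p (j+1)) (q (j+1)) (p j) (q j) hD1 with hbox | hbox | hbox
    · -- box (j ≤ j+1) : j = j₁ (j+1)
      have hj1n : j + 1 ≤ n := by
        by_contra h'
        have hjn : j = n := by omega
        subst hjn
        rw [hqn] at hbox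
        have := hqpos j (le_refl _)
        omega
      have hjj : j = j₁ (j+1) := by
        have h := F.char1 (t := j+1) (x := j) (by omega) hj1n (by omega) hDF hbox.1 hbox.2
        rwa [hFj₁] at h
      have hnot : 1 ≤ j → j₂ j ≠ j + 1 := by
        intro h1 heq
        have hb1 := FC.box2p (F := F) h1 hj
        have hb2 := FC.box2q (F := F) h1 hj
        rw [hFp, hFj₂] at hb1
        rw [hFq, hFj₂] at hb2
        rw [heq] at hb1 hb2
        have : j = j + 1 := hinj j (j+1) (by omega) (by omega)
          (by exact_mod_cast le_antisymm hbox.1 hb1) (by exact_mod_cast le_antisymm hbox.2 hb2)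
        omega
      have key : ∀ t ∈ Finset.Icc 1 n, s j t * s (j+1) t =
          (if j + 1 = t then (-1:ℤ) else 0) := by
        intro t ht
        rw [Finset.mem_Icc] at ht
        rw [hs j t ht.1 ht.2, hs (j+1) t ht.1 ht.2]
        have h1 := hlt1 t ht.1 ht.2
        have h2 := hlt2 t ht.1 ht.2
        by_cases hjt : j = t
        · subst hjt
          have := hnot ht.1
          split_ifs <;> first | omega | norm_num | (exfalso; omega)
        · by_cases hjt1 : j + 1 = t
          · subst hjt1
            split_ifs <;> first | omega | norm_num | (exfalso; omega)
          · split_ifs <;> first | omega | norm_num | (exfalso; omega)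
      rw [Finset.sum_congr rfl key, Finset.sum_ite_eq]
      rw [if_pos (Finset.mem_Icc.mpr ⟨by omega, hj1n⟩)]
    · -- box (j+1 ≤ j) : j+1 = j₂ j
      have hj1 : 1 ≤ j := by
        by_contra h'
        have hj0 : j = 0 := by omega
        subst hj0
        rw [hp0, hp1] at hbox
        omega
      have hD2 : F.D j (j+1) = -1 := by
        rw [F.Dskew, hDF]
      have hjj : j + 1 = j₂ j := by
        have h := F.char2 hj1 hj (by omega) hD2 hbox.1 hbox.2
        rwa [hFj₂] at h
      have hnot : j + 1 ≤ n → j₁ (j+1) ≠ j := by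
        intro h1 heq
        have hb1 := FC.box1p (F := F) (show 1 ≤ j + 1 by omega) h1
        have hb2 := FC.box1q (F := F) (show 1 ≤ j + 1 by omega) h1
        rw [hFp, hFj₁] at hb1
        rw [hFq, hFj₁] at hb2
        rw [heq] at hb1 hb2
        have : j = j + 1 := hinj j (j+1) (by omega) (by omega)
          (by exact_mod_cast le_antisymm hb1 hbox.1) (by exact_mod_cast le_antisymm hb2 hbox.2)
        omega
      have key : ∀ t ∈ Finset.Icc 1 n, s j t * s (j+1) t =
          (if j = t then (-1:ℤ) else 0) := by
        intro t ht
        rw [Finset.mem_Icc] at ht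
        rw [hs j t ht.1 ht.2, hs (j+1) t ht.1 ht.2]
        have h1 := hlt1 t ht.1 ht.2
        have h2 := hlt2 t ht.1 ht.2
        by_cases hjt : j = t
        · subst hjt
          split_ifs <;> first | omega | norm_num | (exfalso; omega)
        · by_cases hjt1 : j + 1 = t
          · subst hjt1
            have := hnot ht.2
            split_ifs <;> first | omega | norm_num | (exfalso; omega)
          · split_ifs <;> first | omega | norm_num | (exfalso; omega)
      rw [Finset.sum_congr rfl key, Finset.sum_ite_eq]
      rw [if_pos (Finset.mem_Icc.mpr ⟨hj1, hj⟩)]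
    · -- degenerate
      exfalso
      have hj0 : j = 0 := by
        by_contra h'
        have := hppos j (by omega) (by omega)
        omega
      subst hj0
      have h2' := hbox.2
      norm_num at h2'
      have := hqpos 1 hn
      omega
  -- ====================== s₀ · s_{n+1} =========================
  have claim4 : (∑ t ∈ Finset.Icc 1 n, s 0 t * s (n + 1) t) = 1 := by
    obtain ⟨m₀, ⟨up_p, up_q⟩, upB, -, -⟩ := F.ray_up (j := 0) (by omega)
    have hru : F.rup 0 = F.n + 1 := by unfold FC.rup; rw [if_pos rfl]
    rw [hru] at up_q
    simp only [hFp, hFq, hFj₁, hFj₂, hFn] at up_q upB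
    rw [hqn, hq0] at up_q
    have hm : (m₀ : ℤ) = q 1 := by push_cast at up_q ⊢; linarith
    have hmn : m₀ = q 1 := by exact_mod_cast hm
    have hm1 : 1 ≤ m₀ := by have := hqpos 1 hn; omega
    obtain ⟨t₀, ht01, ht02, htj, htp, htq⟩ := upB (m₀ - 1) (by omega)
    have hcast : ((m₀ - 1 : ℕ) : ℤ) = (m₀ : ℤ) - 1 := by
      push_cast [Nat.cast_sub hm1]; ring
    rw [hcast] at htp htq
    have htp2 : (p t₀ : ℤ) = (p 1 : ℤ) - ((m₀:ℤ) - 1) * p 0 := htp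
    have htq2 : (q t₀ : ℤ) = (q 1 : ℤ) - ((m₀:ℤ) - 1) * q 0 := htq
    rw [hp0, hp1] at htp2
    rw [hq0] at htq2
    have htp' : (p t₀ : ℤ) = 1 := by push_cast at htp2 ⊢; linarith
    have htq' : (q t₀ : ℤ) = 1 := by push_cast at htq2 ⊢; linarith
    -- second parent of t₀ is n+1
    obtain ⟨hps, hqs, -⟩ := hparent t₀ ht01 ht02
    rw [htj] at hps hqs
    rw [hp0] at hps
    rw [hq0] at hqs
    have hj2t : j₂ t₀ = n + 1 := by
      refine hinj (j₂ t₀) (n+1) (hj₂ t₀ ht01 ht02) (by omega) ?_ ?_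
      · rw [hpn]; push_cast at hps htp' ⊢; omega
      · rw [hqn]; push_cast at hqs htq' ⊢; omega
    -- pointwise formula
    have key : ∀ t ∈ Finset.Icc 1 n, s 0 t * s (n+1) t =
        (if 0 = j₁ t ∧ n + 1 = j₂ t then (1:ℤ) else 0) := by
      intro t ht
      rw [Finset.mem_Icc] at ht
      rw [hs 0 t ht.1 ht.2, hs (n+1) t ht.1 ht.2]
      have h1 := hlt1 t ht.1 ht.2
      have h2 := hlt2 t ht.1 ht.2
      split_ifs <;> first | omega | norm_num | (exfalso; omega)
    rw [Finset.sum_congr rfl key, Finset.sum_boole]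
    have hfil : (Finset.Icc 1 n).filter (fun t => 0 = j₁ t ∧ n + 1 = j₂ t) = {t₀} := by
      ext u
      simp only [Finset.mem_filter, Finset.mem_Icc, Finset.mem_singleton]
      constructor
      · rintro ⟨⟨hu1, hu2⟩, hju1, hju2⟩
        obtain ⟨hps', hqs', -⟩ := hparent u hu1 hu2
        rw [← hju1, ← hju2] at hps' hqs'
        rw [hp0, hpn] at hps'
        rw [hq0, hqn] at hqs'
        refine hinj u t₀ (by omega) (by omega) ?_ ?_
        · rw [htp']; push_cast at hps' ⊢; omega
        · rw [htq']; push_cast at hqs' ⊢; omega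
      · rintro rfl
        exact ⟨⟨ht01, ht02⟩, htj.symm, hj2t.symm⟩
    rw [hfil]
    simp
  -- ====================== distant pairs =========================
  have claim5 : ∀ j l, j < l → l ≤ n + 1 → 2 ≤ l - j → (j, l) ≠ (0, n + 1) →
      (∑ t ∈ Finset.Icc 1 n, s j t * s l t) = 0 := by
    intro j l hjl hln hgap hnepair
    have hne0n : ¬ (j = 0 ∧ l = n + 1) := by
      rintro ⟨rfl, rfl⟩; exact hnepair rfl
    by_cases hcc : ∃ u, 1 ≤ u ∧ u ≤ n ∧ j = j₁ u ∧ l = j₂ u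
    · obtain ⟨t₀, ht01, ht02, htj, htl⟩ := hcc
      obtain ⟨hps, hqs, -⟩ := hparent t₀ ht01 ht02
      rw [← htj, ← htl] at hps hqs
      have hpsz : (p j : ℤ) + p l = p t₀ := by exact_mod_cast hps
      have hqsz : (q j : ℤ) + q l = q t₀ := by exact_mod_cast hqs
      have hDt := FC.Dj1 (F := F) ht01 ht02
      rw [hFD, hFj₁, ← htj] at hDt
      have hD : (p l : ℤ) * q j - (p j : ℤ) * q l = 1 := by
        linear_combination hDt + (q j : ℤ) * hpsz - (p j : ℤ) * hqsz
      have hDFl : F.D l j = 1 := by rw [hFD]; exact hD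
      -- uniqueness of the common child
      have huni : ∀ u, 1 ≤ u → u ≤ n → j = j₁ u → l = j₂ u → u = t₀ := by
        intro u hu1 hu2 hju1 hju2
        obtain ⟨hps', hqs', -⟩ := hparent u hu1 hu2
        rw [← hju1, ← hju2] at hps' hqs'
        refine hinj u t₀ (by omega) (by omega) ?_ ?_
        · push_cast at hps' hpsz ⊢; omega
        · push_cast at hqs' hqsz ⊢; omega
      rcases FC.comparZ (p l) (q l) (p j) (q j) hD with hbox | hbox | hbox
      · -- j = j₁ l
        have hlln : l ≤ n := by
          by_contra h'
          have hl' : l = n + 1 := by omega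
          subst hl'
          rw [hqn] at hbox
          have := hqpos j (by omega)
          omega
        have hl1 : 1 ≤ l := by omega
        have hjj1l : j = j₁ l := by
          have h := F.char1 hl1 hlln (by omega) hDFl hbox.1 hbox.2
          rwa [hFj₁] at h
        have hnot : 1 ≤ j → j₂ j ≠ l := by
          intro h1 heq
          have hb1 := FC.box2p (F := F) h1 (show j ≤ n by omega)
          have hb2 := FC.box2q (F := F) h1 (show j ≤ n by omega)
          rw [hFp, hFj₂] at hb1
          rw [hFq, hFj₂] at hb2
          rw [heq] at hb1 hb2
          have : j = l := hinj j l (by omega) (by omega)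
            (by exact_mod_cast le_antisymm hbox.1 hb1) (by exact_mod_cast le_antisymm hbox.2 hb2)
          omega
        have key : ∀ t ∈ Finset.Icc 1 n, s j t * s l t =
            (if j = j₁ t ∧ l = j₂ t then (1:ℤ) else 0) + (if l = t then (-1:ℤ) else 0) := by
          intro t ht
          rw [Finset.mem_Icc] at ht
          rw [hs j t ht.1 ht.2, hs l t ht.1 ht.2]
          have h1 := hlt1 t ht.1 ht.2
          have h2 := hlt2 t ht.1 ht.2
          by_cases hjt : j = t
          · subst hjt
            have := hnot ht.1
            split_ifs <;> first | omega | norm_num | (exfalso; omega)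
          · by_cases hlt : l = t
            · subst hlt
              split_ifs <;> first | omega | norm_num | (exfalso; omega)
            · split_ifs <;> first | omega | norm_num | (exfalso; omega)
        rw [Finset.sum_congr rfl key, Finset.sum_add_distrib, Finset.sum_boole,
          Finset.sum_ite_eq]
        have hfil : (Finset.Icc 1 n).filter (fun t => j = j₁ t ∧ l = j₂ t) = {t₀} := by
          ext u
          simp only [Finset.mem_filter, Finset.mem_Icc, Finset.mem_singleton]
          constructor
          · rintro ⟨⟨hu1, hu2⟩, hju1, hju2⟩
            exact huni u hu1 hu2 hju1 hju2
          · rintro rfl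
            exact ⟨⟨ht01, ht02⟩, htj, htl⟩
        rw [hfil, if_pos (Finset.mem_Icc.mpr ⟨hl1, hlln⟩)]
        simp
      · -- l = j₂ j
        have hj1' : 1 ≤ j := by
          by_contra h'
          have hj0 : j = 0 := by omega
          subst hj0
          rw [hp0] at hbox
          have := hppos l (by omega) hln
          omega
        have hjn' : j ≤ n := by omega
        have hD2 : F.D j l = -1 := by rw [F.Dskew, hDFl]
        have hlj2 : l = j₂ j := by
          have h := F.char2 hj1' hjn' (by omega) hD2 hbox.1 hbox.2
          rwa [hFj₂] at h
        have hnot : l ≤ n → j₁ l ≠ j := by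
          intro h1 heq
          have hb1 := FC.box1p (F := F) (show 1 ≤ l by omega) h1
          have hb2 := FC.box1q (F := F) (show 1 ≤ l by omega) h1
          rw [hFp, hFj₁] at hb1
          rw [hFq, hFj₁] at hb2
          rw [heq] at hb1 hb2
          have : j = l := hinj j l (by omega) (by omega)
            (by exact_mod_cast le_antisymm hb1 hbox.1) (by exact_mod_cast le_antisymm hb2 hbox.2)
          omega
        have key : ∀ t ∈ Finset.Icc 1 n, s j t * s l t =
            (if j = j₁ t ∧ l = j₂ t then (1:ℤ) else 0) + (if j = t then (-1:ℤ) else 0) := by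
          intro t ht
          rw [Finset.mem_Icc] at ht
          rw [hs j t ht.1 ht.2, hs l t ht.1 ht.2]
          have h1 := hlt1 t ht.1 ht.2
          have h2 := hlt2 t ht.1 ht.2
          by_cases hjt : j = t
          · subst hjt
            split_ifs <;> first | omega | norm_num | (exfalso; omega)
          · by_cases hlt : l = t
            · subst hlt
              have := hnot ht.2
              split_ifs <;> first | omega | norm_num | (exfalso; omega)
            · split_ifs <;> first | omega | norm_num | (exfalso; omega)
        rw [Finset.sum_congr rfl key, Finset.sum_add_distrib, Finset.sum_boole,
          Finset.sum_ite_eq]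
        have hfil : (Finset.Icc 1 n).filter (fun t => j = j₁ t ∧ l = j₂ t) = {t₀} := by
          ext u
          simp only [Finset.mem_filter, Finset.mem_Icc, Finset.mem_singleton]
          constructor
          · rintro ⟨⟨hu1, hu2⟩, hju1, hju2⟩
            exact huni u hu1 hu2 hju1 hju2
          · rintro rfl
            exact ⟨⟨ht01, ht02⟩, htj, htl⟩
        rw [hfil, if_pos (Finset.mem_Icc.mpr ⟨hj1', hjn'⟩)]
        simp
      · -- degenerate: j = 0 and l = n+1, excluded
        exfalso
        have hj0 : j = 0 := by
          by_contra h'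
          have := hppos j (by omega) (by omega)
          omega
        have hl' : l = n + 1 := by
          by_contra h'
          have := hqpos l (by omega)
          omega
        exact hne0n ⟨hj0, hl'⟩
    · -- no common child : all terms vanish
      have hnot1 : ¬ (l ≤ n ∧ j = j₁ l) := by
        rintro ⟨hln', hj1l⟩
        have hl1 : 1 ≤ l := by omega
        obtain ⟨m₀, ⟨up_p, up_q⟩, upB, upC, -⟩ := F.ray_up (j := j) (by omega)
        simp only [hFp, hFq, hFj₁, hFj₂, hFn] at up_p up_q upB upC
        obtain ⟨m, hm, hpl, hql⟩ := upC l hl1 hln' hj1l.symm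
        have hm1 : 1 ≤ m := by
          by_contra h'
          have hm0 : m = 0 := by omega
          subst hm0
          have : l = j + 1 := by
            refine hinj l (j+1) (by omega) (by omega) ?_ ?_
            · rw [hpl]; push_cast; ring
            · rw [hql]; push_cast; ring
          omega
        obtain ⟨u, hu1, hu2, huj, hup, huq⟩ := upB (m - 1) (by omega)
        have hcast : ((m - 1 : ℕ) : ℤ) = (m:ℤ) - 1 := by push_cast [Nat.cast_sub hm1]; ring
        rw [hcast] at hup huq
        obtain ⟨hps, hqs, -⟩ := hparent u hu1 hu2
        rw [huj] at hps hqs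
        have hj2u : j₂ u = l := by
          refine hinj (j₂ u) l (hj₂ u hu1 hu2) (by omega) ?_ ?_
          · have h' : (p j : ℤ) + p (j₂ u) = p u := by exact_mod_cast hps
            rw [hpl]; linarith [hup]
          · have h' : (q j : ℤ) + q (j₂ u) = q u := by exact_mod_cast hqs
            rw [hql]; linarith [huq]
        exact hcc ⟨u, hu1, hu2, huj.symm, hj2u.symm⟩
      have hnot2 : ¬ (1 ≤ j ∧ l = j₂ j) := by
        rintro ⟨hj1', hlj2⟩
        have hjn' : j ≤ n := by omega
        obtain ⟨m₀, ⟨up_p, up_q⟩, upB, upC, -⟩ := F.ray_up (j := j) hjn'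
        have hru : F.rup j = F.j₂ j := by unfold FC.rup; rw [if_neg (by omega)]
        rw [hru] at up_p up_q
        simp only [hFp, hFq, hFj₁, hFj₂, hFn] at up_p up_q upB upC
        rw [← hlj2] at up_p up_q
        have hm1 : 1 ≤ m₀ := by
          by_contra h'
          have hm0 : m₀ = 0 := by omega
          subst hm0
          have : l = j + 1 := by
            refine hinj l (j+1) (by omega) (by omega) ?_ ?_
            · rw [up_p]; push_cast; ring
            · rw [up_q]; push_cast; ring
          omega
        obtain ⟨u, hu1, hu2, huj, hup, huq⟩ := upB (m₀ - 1) (by omega)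
        have hcast : ((m₀ - 1 : ℕ) : ℤ) = (m₀:ℤ) - 1 := by push_cast [Nat.cast_sub hm1]; ring
        rw [hcast] at hup huq
        obtain ⟨hps, hqs, -⟩ := hparent u hu1 hu2
        rw [huj] at hps hqs
        have hj2u : j₂ u = l := by
          refine hinj (j₂ u) l (hj₂ u hu1 hu2) (by omega) ?_ ?_
          · have h' : (p j : ℤ) + p (j₂ u) = p u := by exact_mod_cast hps
            rw [up_p]; linarith [hup]
          · have h' : (q j : ℤ) + q (j₂ u) = q u := by exact_mod_cast hqs
            rw [up_q]; linarith [huq]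
        exact hcc ⟨u, hu1, hu2, huj.symm, hj2u.symm⟩
      have key : ∀ t ∈ Finset.Icc 1 n, s j t * s l t = 0 := by
        intro t ht
        rw [Finset.mem_Icc] at ht
        rw [hs j t ht.1 ht.2, hs l t ht.1 ht.2]
        have h1 := hlt1 t ht.1 ht.2
        have h2 := hlt2 t ht.1 ht.2
        have hc : ¬ (j = j₁ t ∧ l = j₂ t) := by
          rintro ⟨ha, hb⟩
          exact hcc ⟨t, ht.1, ht.2, ha, hb⟩
        by_cases hjt : j = t
        · subst hjt
          have hn2 : l ≠ j₂ j := fun h => hnot2 ⟨ht.1, h⟩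
          split_ifs <;> first | omega | norm_num | (exfalso; omega)
        · by_cases hlt : l = t
          · subst hlt
            have hn1 : j ≠ j₁ l := fun h => hnot1 ⟨ht.2, h⟩
            split_ifs <;> first | omega | norm_num | (exfalso; omega)
          · split_ifs <;> first | omega | norm_num | (exfalso; omega)
      exact Finset.sum_eq_zero key
  exact ⟨claim1, claim2a, claim2b, claim3, claim4, claim5⟩
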